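/- For the equal-SINR case s = SINR for all antennas, the full SE lower bound of Theorem 1, R(s) = log₂ N − N + log₂(1 + N s) − (1/N) Σ_n log₂[Σ_{n'} det(Σ_n)/det(Σ_n+Σ_{n'})] with Σ_n = s^{-1}I + N diag(e_n), is a strictly increasing function of s > 0. -/

import Mathlib

open Set Matrix

section Aux

variable {N : ℕ}

lemma sig_eq_diagonal (s : ℝ) (n : Fin N) :
    s⁻¹ • (1 : Matrix (Fin N) (Fin N) ℝ)
        + Matrix.diagonal (fun i => if i = n then (N : ℝ) else 0)
      = Matrix.diagonal (fun i => s⁻¹ + if i = n then (N : ℝ) else 0) := by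
  ext i j
  by_cases h : i = j
  · subst h
    simp [Matrix.add_apply, Matrix.one_apply, Matrix.diagonal_apply_eq]
  · simp [Matrix.add_apply, Matrix.one_apply_ne h, Matrix.diagonal_apply_ne _ h]

lemma aux_prod_one (n : Fin N) (a b : ℝ) :
    ∏ i : Fin N, (a + if i = n then b else 0) = (a + b) * a ^ (N - 1) := by
  rw [← Finset.mul_prod_erase _ _ (Finset.mem_univ n)]
  rw [if_pos rfl]
  congr 1
  rw [Finset.prod_congr rfl (fun i hi => by
        rw [if_neg (Finset.ne_of_mem_erase hi), add_zero]),
    Finset.prod_const, Finset.card_erase_of_mem (Finset.mem_univ n),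
    Finset.card_univ, Fintype.card_fin]

lemma aux_prod_two {n n' : Fin N} (h : n ≠ n') (a b : ℝ) :
    ∏ i : Fin N, (a + ((if i = n then b else 0) + (if i = n' then b else 0)))
      = (a + b) ^ 2 * a ^ (N - 2) := by
  have hn' : n' ∈ Finset.univ.erase n := Finset.mem_erase.mpr ⟨h.symm, Finset.mem_univ n'⟩
  rw [← Finset.mul_prod_erase _ _ (Finset.mem_univ n),
    ← Finset.mul_prod_erase _ _ hn']
  rw [if_pos rfl, if_neg h, if_pos rfl, if_neg (Ne.symm h)]
  have hrest : ∏ i ∈ (Finset.univ.erase n).erase n',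
      (a + ((if i = n then b else 0) + (if i = n' then b else 0))) = a ^ (N - 2) := by
    rw [Finset.prod_congr rfl (fun i hi => by
          have h1 : i ≠ n' := Finset.ne_of_mem_erase hi
          have h2 : i ≠ n := Finset.ne_of_mem_erase (Finset.mem_of_mem_erase hi)
          rw [if_neg h1, if_neg h2, add_zero, add_zero]),
      Finset.prod_const, Finset.card_erase_of_mem hn',
      Finset.card_erase_of_mem (Finset.mem_univ n), Finset.card_univ, Fintype.card_fin]
    have h12 : N - 1 - 1 = N - 2 := by omega
    rw [h12]
  rw [hrest]
  ring

lemma detRatio_sum (hN : 2 ≤ N) {s : ℝ} (hs : 0 < s) (n : Fin N) :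
    (∑ n' : Fin N,
      (s⁻¹ • (1 : Matrix (Fin N) (Fin N) ℝ)
          + Matrix.diagonal (fun i => if i = n then (N : ℝ) else 0)).det
      / ((s⁻¹ • (1 : Matrix (Fin N) (Fin N) ℝ)
          + Matrix.diagonal (fun i => if i = n then (N : ℝ) else 0))
        + (s⁻¹ • (1 : Matrix (Fin N) (Fin N) ℝ)
          + Matrix.diagonal (fun i => if i = n' then (N : ℝ) else 0))).det)
    = (((N : ℝ) * s) ^ 2 + 4 * N * (N * s) + 4 * N) / (2 ^ N * (2 + N * s) ^ 2) := by
  obtain ⟨M, rfl⟩ : ∃ M, N = M + 2 := ⟨N - 2, by omega⟩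
  set K : ℝ := ((M + 2 : ℕ) : ℝ) with hK
  have hKpos : (0 : ℝ) < K := by positivity
  have ht : 0 < s⁻¹ := inv_pos.mpr hs
  have hs' : s ≠ 0 := hs.ne'
  -- determinant of Sig s m
  have hdet : ∀ m : Fin (M + 2),
      (s⁻¹ • (1 : Matrix (Fin (M+2)) (Fin (M+2)) ℝ)
        + Matrix.diagonal (fun i => if i = m then (((M+2:ℕ)) : ℝ) else 0)).det
      = (s⁻¹ + K) * s⁻¹ ^ (M + 1) := by
    intro m
    rw [sig_eq_diagonal, Matrix.det_diagonal, aux_prod_one,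
      show M + 2 - 1 = M + 1 by omega, ← hK]
  -- determinant of the sum, same index
  have hdet_same :
      ((s⁻¹ • (1 : Matrix (Fin (M+2)) (Fin (M+2)) ℝ)
        + Matrix.diagonal (fun i => if i = n then (((M+2:ℕ)) : ℝ) else 0))
       + (s⁻¹ • (1 : Matrix (Fin (M+2)) (Fin (M+2)) ℝ)
        + Matrix.diagonal (fun i => if i = n then (((M+2:ℕ)) : ℝ) else 0))).det
      = 2 ^ (M + 2) * ((s⁻¹ + K) * s⁻¹ ^ (M + 1)) := by
    rw [sig_eq_diagonal, Matrix.diagonal_add, Matrix.det_diagonal]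
    have h1 : ∀ i : Fin (M + 2),
        (s⁻¹ + if i = n then (((M+2:ℕ)) : ℝ) else 0) + (s⁻¹ + if i = n then (((M+2:ℕ)) : ℝ) else 0)
        = 2 * s⁻¹ + if i = n then 2 * (((M+2:ℕ)) : ℝ) else 0 := by
      intro i; split_ifs <;> ring
    rw [Finset.prod_congr rfl (fun i _ => h1 i), aux_prod_one,
      show M + 2 - 1 = M + 1 by omega, ← hK, mul_pow]
    ring
  -- determinant of the sum, distinct indices
  have hdet_ne : ∀ m : Fin (M + 2), n ≠ m →
      ((s⁻¹ • (1 : Matrix (Fin (M+2)) (Fin (M+2)) ℝ)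
        + Matrix.diagonal (fun i => if i = n then (((M+2:ℕ)) : ℝ) else 0))
       + (s⁻¹ • (1 : Matrix (Fin (M+2)) (Fin (M+2)) ℝ)
        + Matrix.diagonal (fun i => if i = m then (((M+2:ℕ)) : ℝ) else 0))).det
      = (2 * s⁻¹ + K) ^ 2 * (2 * s⁻¹) ^ M := by
    intro m hm
    rw [sig_eq_diagonal, sig_eq_diagonal, Matrix.diagonal_add, Matrix.det_diagonal]
    have h1 : ∀ i : Fin (M + 2),
        (s⁻¹ + if i = n then (((M+2:ℕ)) : ℝ) else 0) + (s⁻¹ + if i = m then (((M+2:ℕ)) : ℝ) else 0)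
        = 2 * s⁻¹ + ((if i = n then (((M+2:ℕ)) : ℝ) else 0) + (if i = m then (((M+2:ℕ)) : ℝ) else 0)) := by
      intro i; ring
    rw [Finset.prod_congr rfl (fun i _ => h1 i), aux_prod_two hm,
      show M + 2 - 2 = M by omega, ← hK]
  -- split off the diagonal term
  rw [← Finset.add_sum_erase _ _ (Finset.mem_univ n)]
  have hterm_same :
      (s⁻¹ • (1 : Matrix (Fin (M+2)) (Fin (M+2)) ℝ)
        + Matrix.diagonal (fun i => if i = n then (((M+2:ℕ)) : ℝ) else 0)).det
      / ((s⁻¹ • (1 : Matrix (Fin (M+2)) (Fin (M+2)) ℝ)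
        + Matrix.diagonal (fun i => if i = n then (((M+2:ℕ)) : ℝ) else 0))
       + (s⁻¹ • (1 : Matrix (Fin (M+2)) (Fin (M+2)) ℝ)
        + Matrix.diagonal (fun i => if i = n then (((M+2:ℕ)) : ℝ) else 0))).det
      = 1 / 2 ^ (M + 2) := by
    rw [hdet n, hdet_same]
    rw [div_eq_div_iff (by positivity) (by positivity)]
    ring
  have hterm_ne : ∀ m ∈ Finset.univ.erase n,
      (s⁻¹ • (1 : Matrix (Fin (M+2)) (Fin (M+2)) ℝ)
        + Matrix.diagonal (fun i => if i = n then (((M+2:ℕ)) : ℝ) else 0)).det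
      / ((s⁻¹ • (1 : Matrix (Fin (M+2)) (Fin (M+2)) ℝ)
        + Matrix.diagonal (fun i => if i = n then (((M+2:ℕ)) : ℝ) else 0))
       + (s⁻¹ • (1 : Matrix (Fin (M+2)) (Fin (M+2)) ℝ)
        + Matrix.diagonal (fun i => if i = m then (((M+2:ℕ)) : ℝ) else 0))).det
      = (1 + K * s) / (2 ^ M * (2 + K * s) ^ 2) := by
    intro m hm
    rw [hdet n, hdet_ne m (Ne.symm (Finset.ne_of_mem_erase hm))]
    have h2tK : (0:ℝ) < 2 * s⁻¹ + K := by positivity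
    have h2Ks : (0:ℝ) < 2 + K * s := by positivity
    rw [div_eq_div_iff (by positivity) (by positivity)]
    have hbase : (s⁻¹ + K) * s⁻¹ * (2 ^ M * (2 + K * s) ^ 2)
        = (1 + K * s) * ((2 * s⁻¹ + K) ^ 2 * 2 ^ M) := by
      field_simp
    calc (s⁻¹ + K) * s⁻¹ ^ (M + 1) * (2 ^ M * (2 + K * s) ^ 2)
        = s⁻¹ ^ M * ((s⁻¹ + K) * s⁻¹ * (2 ^ M * (2 + K * s) ^ 2)) := by
          rw [pow_succ]; ring
      _ = s⁻¹ ^ M * ((1 + K * s) * ((2 * s⁻¹ + K) ^ 2 * 2 ^ M)) := by rw [hbase]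
      _ = (1 + K * s) * ((2 * s⁻¹ + K) ^ 2 * (2 * s⁻¹) ^ M) := by
          rw [mul_pow]; ring
  rw [hterm_same, Finset.sum_congr rfl hterm_ne, Finset.sum_const,
    Finset.card_erase_of_mem (Finset.mem_univ n), Finset.card_univ, Fintype.card_fin,
    nsmul_eq_mul]
  have h2Ks : (0:ℝ) < 2 + K * s := by positivity
  have hcast : ((M + 2 - 1 : ℕ) : ℝ) = ((M:ℝ) + 1) := by push_cast [show M + 2 - 1 = M + 1 from rfl]; ring
  rw [hcast, hK]
  push_cast
  have hq : (2 + ((M:ℝ) + 2) * s) ≠ 0 := by positivity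
  field_simp
  ring

end Aux

/-- In the equal-SINR case, the full SE lower bound of Theorem 1,
`R(s) = log₂ N − N + log₂(1 + N s)
        − (1/N) ∑_n log₂[∑_{n'} det Σ_n / det(Σ_n + Σ_{n'})]`
with `Σ_n = s⁻¹ I + N·diag(e_n)`, is strictly increasing in `s > 0`:
a higher SINR leads to a larger SE. -/
theorem se_lower_bound_strictMono (N : ℕ) (hN : 2 ≤ N) :
    let Sig : ℝ → Fin N → Matrix (Fin N) (Fin N) ℝ := fun s n =>
      s⁻¹ • (1 : Matrix (Fin N) (Fin N) ℝ)
        + Matrix.diagonal (fun i => if i = n then (N : ℝ) else 0)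
    let R : ℝ → ℝ := fun s =>
      Real.logb 2 N - N + Real.logb 2 (1 + N * s)
        - (1 / N) * ∑ n : Fin N,
            Real.logb 2 (∑ n' : Fin N, (Sig s n).det / (Sig s n + Sig s n').det)
    StrictMonoOn R (Ioi 0) := by
  intro Sig R
  have hN0 : (0 : ℝ) < N := by positivity
  have hNne : (N : ℝ) ≠ 0 := hN0.ne'
  -- closed form of R on Ioi 0
  have hS : ∀ s : ℝ, 0 < s →
      (0 : ℝ) < (((N : ℝ) * s) ^ 2 + 4 * N * (N * s) + 4 * N) / (2 ^ N * (2 + N * s) ^ 2) := by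
    intro s hs
    positivity
  have hRform : ∀ s : ℝ, 0 < s →
      R s = Real.logb 2 N - N + Real.logb 2 (1 + N * s)
        - Real.logb 2 ((((N : ℝ) * s) ^ 2 + 4 * N * (N * s) + 4 * N)
            / (2 ^ N * (2 + N * s) ^ 2)) := by
    intro s hs
    show Real.logb 2 N - N + Real.logb 2 (1 + N * s)
        - (1 / N) * ∑ n : Fin N,
            Real.logb 2 (∑ n' : Fin N, (Sig s n).det / (Sig s n + Sig s n').det) = _
    have hsum : ∀ n : Fin N,
        Real.logb 2 (∑ n' : Fin N, (Sig s n).det / (Sig s n + Sig s n').det)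
        = Real.logb 2 ((((N : ℝ) * s) ^ 2 + 4 * N * (N * s) + 4 * N)
            / (2 ^ N * (2 + N * s) ^ 2)) := by
      intro n
      rw [show (∑ n' : Fin N, (Sig s n).det / (Sig s n + Sig s n').det)
          = (((N : ℝ) * s) ^ 2 + 4 * N * (N * s) + 4 * N) / (2 ^ N * (2 + N * s) ^ 2)
        from detRatio_sum hN hs n]
    rw [Finset.sum_congr rfl (fun n _ => hsum n), Finset.sum_const, Finset.card_univ,
      Fintype.card_fin, nsmul_eq_mul]
    field_simp
  intro a ha b hb hab
  rw [mem_Ioi] at ha hb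
  rw [hRform a ha, hRform b hb]
  have h1a : (0:ℝ) < 1 + N * a := by positivity
  have h1b : (0:ℝ) < 1 + N * b := by positivity
  have hSa := hS a ha
  have hSb := hS b hb
  have key : (1 + (N:ℝ) * a) / ((((N : ℝ) * a) ^ 2 + 4 * N * (N * a) + 4 * N) / (2 ^ N * (2 + N * a) ^ 2))
      < (1 + (N:ℝ) * b) / ((((N : ℝ) * b) ^ 2 + 4 * N * (N * b) + 4 * N) / (2 ^ N * (2 + N * b) ^ 2)) := by
    set x := (N:ℝ) * a with hx
    set y := (N:ℝ) * b with hy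
    have hxpos : 0 < x := by positivity
    have hypos : 0 < y := by positivity
    have hxy : x < y := by
      exact mul_lt_mul_of_pos_left hab hN0
    have hn2 : (2:ℝ) ≤ (N:ℝ) := by exact_mod_cast hN
    set n : ℝ := (N:ℝ) with hn
    have hDx : (0:ℝ) < x ^ 2 + 4 * n * x + 4 * n := by positivity
    have hDy : (0:ℝ) < y ^ 2 + 4 * n * y + 4 * n := by positivity
    have h2x : (0:ℝ) < 2 + x := by linarith
    have h2y : (0:ℝ) < 2 + y := by linarith
    have h2N : (0:ℝ) < (2:ℝ) ^ N := by positivity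
    rw [div_div_eq_mul_div, div_div_eq_mul_div, div_lt_div_iff₀ hDx hDy]
    have hQ : 0 < (4*n + 4*n*x + x^2) * y^2
        + (20*n - 4 + (24*n - 8)*x + 4*n*x^2) * y
        + (16*n + (20*n - 4)*x + 4*n*x^2) := by
      nlinarith [mul_nonneg (show (0:ℝ) ≤ n - 2 by linarith)
          (show (0:ℝ) ≤ 4*y^2 + 4*x*y^2 + 20*y + 24*x*y + 4*x^2*y + 16 + 20*x + 4*x^2 by positivity),
        mul_pos hxpos hypos, sq_nonneg (x*y)]
    have hbase : (1 + x) * (2 + x) ^ 2 * (y ^ 2 + 4 * n * y + 4 * n)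
        < (1 + y) * (2 + y) ^ 2 * (x ^ 2 + 4 * n * x + 4 * n) := by
      nlinarith [mul_pos (sub_pos.mpr hxy) hQ]
    calc (1 + x) * (2 ^ N * (2 + x) ^ 2) * (y ^ 2 + 4 * n * y + 4 * n)
        = 2 ^ N * ((1 + x) * (2 + x) ^ 2 * (y ^ 2 + 4 * n * y + 4 * n)) := by ring
      _ < 2 ^ N * ((1 + y) * (2 + y) ^ 2 * (x ^ 2 + 4 * n * x + 4 * n)) := by
          exact mul_lt_mul_of_pos_left hbase h2N
      _ = (1 + y) * (2 ^ N * (2 + y) ^ 2) * (x ^ 2 + 4 * n * x + 4 * n) := by ring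
  have := Real.logb_lt_logb (by norm_num : (1:ℝ) < 2) (div_pos h1a hSa) key
  rw [Real.logb_div h1a.ne' hSa.ne', Real.logb_div h1b.ne' hSb.ne'] at this
  linarith
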